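/- Let X = ℝⁿ with the standard (Euclidean) inner product, let M : X → X be a linear operator with ⟨M x, x⟩ ≥ 0 for all x (i.e., M + Mᵀ positive semidefinite), and let b ∈ X. Define A x = −b (a constant single-valued operator) and B x = M x. Then: (i) Id + M is bijective; let J := (Id + M)⁻¹ and define the Douglas–Rachford operator of (A,B) by T x = J x + b (which equals J_A(2 J x − x) + x − J x with J_A y = y + b). Then x − T x = M(J x) − b for all x, and the range of Id − T equals {M y − b : y ∈ X} = range(M) − b; (ii) the minimal-norm element of this set is v := P_{range M}(b) − b, where P_{range M} is the orthogonal projection onto the subspace range(M); and (iii) for x ∈ X, one has M x − b = v (i.e., x is a normal solution) if and only if ‖M x − b‖ ≤ ‖M y − b‖ for all y ∈ X, i.e., the normal solutions are precisely the classical least squares solutions of M x = b. -/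

import Mathlib

open scoped RealInnerProductSpace

lemma stmt19_pyth {n : ℕ} (K : Submodule ℝ (EuclideanSpace ℝ (Fin n)))
    (b w : EuclideanSpace ℝ (Fin n)) (hw : w ∈ K) :
    ‖w - b‖ ^ 2 = ‖w - (K.orthogonalProjectionOnto b : EuclideanSpace ℝ (Fin n))‖ ^ 2
      + ‖(K.orthogonalProjectionOnto b : EuclideanSpace ℝ (Fin n)) - b‖ ^ 2 := by
  set p : EuclideanSpace ℝ (Fin n) := (K.orthogonalProjectionOnto b : EuclideanSpace ℝ (Fin n))
  have hperp : b - p ∈ Kᗮ := K.sub_starProjection_mem_orthogonal b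
  have hwp : w - p ∈ K := K.sub_mem hw (K.orthogonalProjectionOnto b).2
  have h0 : ⟪w - p, b - p⟫ = 0 := hperp (w - p) hwp
  have h1 : w - b = (w - p) - (b - p) := by abel
  rw [h1, norm_sub_sq_real, h0]
  have : ‖b - p‖ = ‖p - b‖ := by rw [norm_sub_rev]
  rw [this]; ring

/-- In `ℝⁿ` with monotone linear `M` and `b ∈ ℝⁿ`, for the pair
`A ≡ -b`, `B = M`: (i) `Id + M` is bijective, and with `J = (Id + M)⁻¹` the
Douglas–Rachford operator is `T x = J x + b`, with `x - T x = M (J x) - b` and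
`ran (Id - T) = ran M - b`; (ii) the minimal-norm element of `ran M - b` is
`v = P_{ran M} b - b`; (iii) the normal solutions (`M x - b = v`) are precisely the
classical least squares solutions of `M x = b`. -/
theorem stmt19 {n : ℕ} (M : EuclideanSpace ℝ (Fin n) →ₗ[ℝ] EuclideanSpace ℝ (Fin n))
    (hM : ∀ x, 0 ≤ ⟪M x, x⟫) (b : EuclideanSpace ℝ (Fin n)) :
    Function.Bijective (fun x => x + M x) ∧
    (∀ J : EuclideanSpace ℝ (Fin n) → EuclideanSpace ℝ (Fin n),
      (∀ y, J y + M (J y) = y) →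
      ((∀ x, (2 • J x - x + b) + x - J x = J x + b) ∧
       (∀ x, x - (J x + b) = M (J x) - b) ∧
       {y | ∃ x, y = x - (J x + b)} = {y | ∃ x, y = M x - b})) ∧
    (((LinearMap.range M).orthogonalProjectionOnto b : EuclideanSpace ℝ (Fin n)) - b
        ∈ {y | ∃ x, y = M x - b} ∧
      ∀ s ∈ {y : EuclideanSpace ℝ (Fin n) | ∃ x, y = M x - b},
        ‖((LinearMap.range M).orthogonalProjectionOnto b : EuclideanSpace ℝ (Fin n)) - b‖ ≤ ‖s‖) ∧
    (∀ x, (M x - b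
        = ((LinearMap.range M).orthogonalProjectionOnto b : EuclideanSpace ℝ (Fin n)) - b)
      ↔ ∀ y, ‖M x - b‖ ≤ ‖M y - b‖) := by
  set K := LinearMap.range M with hK
  set p : EuclideanSpace ℝ (Fin n) := (K.orthogonalProjectionOnto b : EuclideanSpace ℝ (Fin n))
    with hp
  -- injectivity of Id + M
  have hinj : Function.Injective (fun x => x + M x) := by
    intro x y hxy
    have hd : (x - y) + M (x - y) = 0 := by
      simp only [map_sub]
      simp only at hxy
      rw [sub_add_sub_comm, hxy, sub_self]
    have h0 : (0 : ℝ) = ⟪(x - y) + M (x - y), x - y⟫ := by rw [hd, inner_zero_left]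
    rw [inner_add_left, real_inner_self_eq_norm_sq] at h0
    have hMd := hM (x - y)
    have : x - y = 0 := by
      rw [← norm_eq_zero]
      nlinarith [norm_nonneg (x - y)]
    exact sub_eq_zero.mp this
  have hLM : (fun x => x + M x) = ⇑((LinearMap.id : EuclideanSpace ℝ (Fin n) →ₗ[ℝ] EuclideanSpace ℝ (Fin n)) + M) := rfl
  have hbij : Function.Bijective (fun x => x + M x) := by
    refine ⟨hinj, ?_⟩
    rw [hLM] at hinj ⊢
    exact (LinearMap.injective_iff_surjective).mp hinj
  -- the Pythagoras-based minimality
  have hpmem : p ∈ K := (K.orthogonalProjectionOnto b).2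
  obtain ⟨x0, hx0⟩ := hpmem
  have hmin : ∀ y, ‖p - b‖ ≤ ‖M y - b‖ := by
    intro y
    have := stmt19_pyth K b (M y) ⟨y, rfl⟩
    nlinarith [norm_nonneg (p - b), norm_nonneg (M y - b), sq_nonneg ‖M y - p‖]
  refine ⟨hbij, ?_, ⟨⟨x0, by rw [hx0]⟩, ?_⟩, ?_⟩
  · intro J hJ
    have hsub : ∀ x, x - (J x + b) = M (J x) - b := by
      intro x
      have h2 : M (J x) = x - J x := by
        rw [eq_sub_iff_add_eq, add_comm]; exact hJ x
      rw [h2]; abel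
    refine ⟨fun x => by abel, hsub, ?_⟩
    ext y
    constructor
    · rintro ⟨x, rfl⟩
      exact ⟨J x, hsub x⟩
    · rintro ⟨x, rfl⟩
      refine ⟨x + M x, ?_⟩
      have hJx : J (x + M x) = x := by
        apply hinj
        simp only
        rw [hJ (x + M x)]
      rw [hJx]; abel
  · rintro s ⟨y, rfl⟩
    exact hmin y
  · intro x
    constructor
    · intro h y
      rw [h]
      exact hmin y
    · intro h
      have h1 := h x0
      rw [hx0] at h1
      have h2 := stmt19_pyth K b (M x) ⟨x, rfl⟩
      have h3 : ‖M x - p‖ ^ 2 ≤ 0 := by nlinarith [norm_nonneg (M x - b), norm_nonneg (p - b)]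
      have h4 : M x - p = 0 := by
        rw [← norm_eq_zero]
        nlinarith [norm_nonneg (M x - p)]
      have : M x = p := sub_eq_zero.mp h4
      rw [this]
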